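/- arXiv:1612.08364 — 6 statements merged into one kernel-verified Lean document; each statement's English description precedes it below -/
import Mathlib

section
/- Let F : ℂ → ℂ be an entire (holomorphic on all of ℂ) function such that F(z + λ) − F(z) ∈ Λ_γ for every λ ∈ Λ_γ and every z ∈ ℂ. Then there exist a, b ∈ ℂ such that F(z) = a·z + b for all z ∈ ℂ (i.e., every holomorphic self-map of the complex torus X_γ lifts to an affine map of ℂ). -/
open Complex

/-- The lattice `Λ_γ ⊆ ℂ` generated by `1` and `γ`. -/
noncomputable def Lambda (γ : ℂ) : AddSubgroup ℂ := AddSubgroup.closure {1, γ}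

/-- A continuous integer-valued function on `ℂ` is constant. -/
lemma intValued_const (f : ℂ → ℝ) (hf : Continuous f) (h : ∀ z, ∃ n : ℤ, f z = n) :
    ∀ z w : ℂ, f z = f w := by
  intro z w
  by_contra hne
  wlog hlt : f z < f w generalizing z w
  · exact this w z (Ne.symm hne) (lt_of_le_of_ne (not_lt.1 hlt) (Ne.symm hne))
  obtain ⟨nz, hnz⟩ := h z
  obtain ⟨nw, hnw⟩ := h w
  have hmid : (nz : ℝ) + 1/2 ∈ Set.Icc (f z) (f w) := by
    constructor
    · rw [hnz]; linarith
    · have : (nz : ℝ) < nw := by rw [← hnz, ← hnw]; exact hlt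
      have : nz + 1 ≤ nw := by exact_mod_cast this
      have : ((nz : ℝ)) + 1 ≤ nw := by exact_mod_cast this
      rw [hnw]; linarith
  obtain ⟨u, hu⟩ := intermediate_value_univ z w hf hmid
  obtain ⟨m, hm⟩ := h u
  rw [hm] at hu
  have : ((m : ℝ) - nz) = 1/2 := by linarith
  have : ((m - nz : ℤ) : ℝ) = 1/2 := by push_cast; linarith
  rcases le_or_gt (m - nz) 0 with hc | hc
  · have : ((m - nz : ℤ) : ℝ) ≤ 0 := by exact_mod_cast hc
    linarith
  · have : (1 : ℤ) ≤ m - nz := hc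
    have : (1 : ℝ) ≤ ((m - nz : ℤ) : ℝ) := by exact_mod_cast this
    linarith

/-- Every entire function `F : ℂ → ℂ` such that `F (z + λ) - F z ∈ Λ_γ` for all `λ ∈ Λ_γ`
and all `z` (i.e. every holomorphic self-map of the torus `X_γ` lifted to `ℂ`) is affine. -/
theorem entire_lattice_periodic_is_affine (γ : ℂ) (hγ : 0 < γ.im)
    (F : ℂ → ℂ) (hF : Differentiable ℂ F)
    (hper : ∀ l ∈ Lambda γ, ∀ z : ℂ, F (z + l) - F z ∈ Lambda γ) :
    ∃ a b : ℂ, ∀ z : ℂ, F z = a * z + b := by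
  -- coordinate functions with respect to the basis (1, γ)
  set t : ℂ → ℝ := fun w => w.im / γ.im with ht
  set s : ℂ → ℝ := fun w => w.re - t w * γ.re with hs
  have hγim : γ.im ≠ 0 := ne_of_gt hγ
  have hrecon : ∀ w : ℂ, w = (s w : ℂ) + (t w : ℂ) * γ := by
    intro w
    apply Complex.ext <;> simp [hs, ht, Complex.add_re, Complex.add_im, Complex.mul_re,
      Complex.mul_im, div_mul_cancel₀, hγim]
  have hts : ∀ w ∈ Lambda γ, (∃ n : ℤ, t w = n) ∧ (∃ m : ℤ, s w = m) := by
    intro w hw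
    rw [Lambda, AddSubgroup.mem_closure_pair] at hw
    obtain ⟨m, n, hmnw⟩ := hw
    have hw' : w = (m : ℂ) + (n : ℂ) * γ := by
      rw [← hmnw]; push_cast [zsmul_eq_mul]; ring
    constructor
    · exact ⟨n, by rw [hw']; simp [ht, hγim, mul_div_assoc]⟩
    · refine ⟨m, ?_⟩
      have htn : t w = (n : ℝ) := by rw [hw']; simp [ht, hγim, mul_div_assoc]
      have hsw : s w = w.re - t w * γ.re := rfl
      rw [hsw, htn, hw']
      simp
  have hcont : Continuous F := hF.continuous
  have hts_cont : Continuous t ∧ Continuous s := by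
    constructor
    · exact (Complex.continuous_im).div_const _
    · exact Complex.continuous_re.sub (((Complex.continuous_im).div_const _).mul continuous_const)
  -- Step 1: for l ∈ Λ, z ↦ F (z + l) - F z is constant
  have hconst : ∀ l ∈ Lambda γ, ∀ z : ℂ, F (z + l) - F z = F (0 + l) - F 0 := by
    intro l hl z
    set g : ℂ → ℂ := fun z => F (z + l) - F z with hg
    have hgc : Continuous g := (hcont.comp (continuous_id.add continuous_const)).sub hcont
    have hgt : ∀ z w : ℂ, t (g z) = t (g w) :=
      intValued_const _ (hts_cont.1.comp hgc) fun z => (hts (g z) (hper l hl z)).1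
    have hgs : ∀ z w : ℂ, s (g z) = s (g w) :=
      intValued_const _ (hts_cont.2.comp hgc) fun z => (hts (g z) (hper l hl z)).2
    have : g z = g 0 := by
      rw [hrecon (g z), hrecon (g 0), hgt z 0, hgs z 0]
    exact this
  -- Step 2: deriv F is periodic with periods 1 and γ
  have hmem1 : (1 : ℂ) ∈ Lambda γ := AddSubgroup.subset_closure (by simp)
  have hmemγ : γ ∈ Lambda γ := AddSubgroup.subset_closure (by simp)
  have hper' : ∀ l ∈ Lambda γ, Function.Periodic (deriv F) l := by
    intro l hl z
    have hfun : (fun z => F (z + l)) = fun z => F z + (F (0 + l) - F 0) := by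
      funext z
      have := hconst l hl z
      linear_combination this
    have h1 : deriv (fun z => F (z + l)) z = deriv F (z + l) := by
      simpa using deriv_comp_add_const F l z
    have h2 : deriv (fun z => F z + (F (0 + l) - F 0)) z = deriv F z := by
      simp [deriv_add_const]
    rw [← h1, hfun, h2]
  have hp1 : Function.Periodic (deriv F) 1 := hper' 1 hmem1
  have hpγ : Function.Periodic (deriv F) γ := hper' γ hmemγ
  -- deriv F is invariant under the lattice
  have hlat : ∀ (m n : ℤ) (z : ℂ), deriv F (z + (m • (1:ℂ) + n • γ)) = deriv F z := by
    intro m n z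
    have := (hp1.zsmul m) (z + n • γ)
    have h2 := (hpγ.zsmul n) z
    calc deriv F (z + (m • (1:ℂ) + n • γ)) = deriv F (z + n • γ + m • (1:ℂ)) := by ring_nf
      _ = deriv F (z + n • γ) := this
      _ = deriv F z := h2
  -- Step 3: deriv F is bounded: its range is contained in the image of a compact set
  set K : Set ℂ := (fun p : ℝ × ℝ => (p.1 : ℂ) + (p.2 : ℂ) * γ) '' (Set.Icc 0 1 ×ˢ Set.Icc 0 1)
    with hK
  have hKcompact : IsCompact K :=
    (isCompact_Icc.prod isCompact_Icc).image
      ((Complex.continuous_ofReal.comp continuous_fst).add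
        ((Complex.continuous_ofReal.comp continuous_snd).mul continuous_const))
  have hdF : Differentiable ℂ (deriv F) := by
    have := ((hF.differentiableOn (s := Set.univ)).analyticOnNhd isOpen_univ).deriv
    exact fun z => ((this z (Set.mem_univ z)).differentiableAt).differentiableWithinAt
      |>.differentiableAt Filter.univ_mem
  have hrange : Set.range (deriv F) ⊆ deriv F '' K := by
    rintro _ ⟨z, rfl⟩
    set m : ℤ := ⌊s z⌋ with hm
    set n : ℤ := ⌊t z⌋ with hn
    set w : ℂ := ((s z - m : ℝ) : ℂ) + ((t z - n : ℝ) : ℂ) * γ with hw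
    have hzw : z = w + (m • (1:ℂ) + n • γ) := by
      rw [hw]
      have := hrecon z
      push_cast [zsmul_eq_mul]
      linear_combination this
    refine ⟨w, ⟨(s z - m, t z - n), ⟨⟨?_, ?_⟩, rfl⟩⟩, ?_⟩
    · rw [Set.mem_Icc, hm]
      have h1 : (⌊s z⌋ : ℝ) ≤ s z := Int.floor_le _
      have h2 : s z < ⌊s z⌋ + 1 := Int.lt_floor_add_one _
      constructor <;> (dsimp only; linarith)
    · rw [Set.mem_Icc, hn]
      have h1 : (⌊t z⌋ : ℝ) ≤ t z := Int.floor_le _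
      have h2 : t z < ⌊t z⌋ + 1 := Int.lt_floor_add_one _
      constructor <;> (dsimp only; linarith)
    · rw [hzw, hlat]
  have hbounded : Bornology.IsBounded (Set.range (deriv F)) :=
    ((hKcompact.image hdF.continuous).isBounded).subset hrange
  -- Step 4: Liouville: deriv F is constant
  set a : ℂ := deriv F 0 with ha
  have hda : ∀ z : ℂ, deriv F z = a := fun z =>
    hdF.apply_eq_apply_of_bounded hbounded z 0
  -- Step 5: integrate
  refine ⟨a, F 0, fun z => ?_⟩
  set G : ℂ → ℂ := fun z => F z - a * z with hG
  have hGd : Differentiable ℂ G := hF.sub ((differentiable_id.const_mul a))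
  have hGz : ∀ z, deriv G z = 0 := by
    intro z
    have h1 : HasDerivAt G (deriv F z - a * 1) z :=
      (hF z).hasDerivAt.sub ((hasDerivAt_id z).const_mul a)
    rw [h1.deriv, hda]; ring
  have := is_const_of_deriv_eq_zero hGd hGz z 0
  simp only [hG] at this
  linear_combination this
end

section
/- Let F : ℂ → ℂ be a function such that z ↦ F(conj(z)) is entire, F(z + λ) − F(z) ∈ Λ_γ for every λ ∈ Λ_γ and every z ∈ ℂ, and F(F(z)) − z ∈ Λ_γ for every z ∈ ℂ (so F induces an anti-holomorphic involution of X_γ). Then there exist a, b ∈ ℂ such that F(z) = a·conj(z) + b for all z, with a·conj(a) = 1, a·conj(Λ_γ) = Λ_γ, and a·conj(b) + b ∈ Λ_γ. (This is the general form of the anti-holomorphic involutions t_y ∘ α_{(−,a)} of Table 5.) -/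
open Complex

lemma range_pair (x y : ℂ) : Set.range ![x, y] = {x, y} := by
  ext z; simp [Fin.exists_fin_two]; tauto

noncomputable def basisOf (w : ℂ) (hw : w.im ≠ 0) : Module.Basis (Fin 2) ℝ ℂ :=
  Module.Basis.mk (v := ![1, w])
    (LinearIndependent.pair_iff.mpr (by
      intro s t h
      have him := congrArg Complex.im h
      have hre := congrArg Complex.re h
      simp [Complex.real_smul, Complex.add_im, Complex.add_re, Complex.mul_im,
        Complex.mul_re] at him hre
      rcases him with h' | h'
      swap
      · exact absurd h' hw
      subst h'
      simp at hre
      exact ⟨hre, rfl⟩))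
    (by
      rw [range_pair]
      intro z _
      rw [Submodule.mem_span_pair]
      refine ⟨z.re - z.im / w.im * w.re, z.im / w.im, ?_⟩
      apply Complex.ext
      · simp [Complex.real_smul, Complex.mul_re]
      · simp [Complex.real_smul, Complex.mul_im]
        field_simp)

lemma basisOf_coe (w : ℂ) (hw : w.im ≠ 0) : ⇑(basisOf w hw) = ![1, w] := by
  simp [basisOf]

lemma const_of_discrete {S : Set ℂ} [DiscreteTopology S] {f : ℂ → ℂ}
    (hf : Continuous f) (h : ∀ z, f z ∈ S) (z : ℂ) : f z = f 0 :=
  IsPreconnected.constant_of_mapsTo isPreconnected_univ (isDiscrete_iff_discreteTopology.mpr ‹_›) hf.continuousOn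
    (fun x _ => h x) trivial trivial

/-- General form of anti-holomorphic involutions of the elliptic curve `X_γ`, lifted to `ℂ`:
if `z ↦ F (conj z)` is entire, `F` is `Λ_γ`-equivariant modulo `Λ_γ`, and `F ∘ F` is the
identity modulo `Λ_γ`, then `F z = a * conj z + b` with `a * conj a = 1`,
`a • conj (Λ_γ) = Λ_γ` and `a * conj b + b ∈ Λ_γ`. -/
theorem antiholomorphic_involution_form (γ : ℂ) (hγ : 0 < γ.im)
    (F : ℂ → ℂ) (hF : Differentiable ℂ (fun z => F (starRingEnd ℂ z)))
    (hper : ∀ l ∈ Lambda γ, ∀ z : ℂ, F (z + l) - F z ∈ Lambda γ)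
    (hinv : ∀ z : ℂ, F (F z) - z ∈ Lambda γ) :
    ∃ a b : ℂ, (∀ z : ℂ, F z = a * starRingEnd ℂ z + b) ∧
      a * starRingEnd ℂ a = 1 ∧
      (fun l => a * starRingEnd ℂ l) '' (Lambda γ : Set ℂ) = (Lambda γ : Set ℂ) ∧
      a * starRingEnd ℂ b + b ∈ Lambda γ := by
  have hγ0 : γ.im ≠ 0 := ne_of_gt hγ
  have hγc : (starRingEnd ℂ γ).im ≠ 0 := by
    rw [Complex.conj_im]; exact neg_ne_zero.mpr hγ0
  set bγ : Module.Basis (Fin 2) ℝ ℂ := basisOf γ hγ0 with hbγ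
  set bb : Module.Basis (Fin 2) ℝ ℂ := basisOf (starRingEnd ℂ γ) hγc with hbb
  have hset : (Lambda γ : Set ℂ) = (Submodule.span ℤ (Set.range ⇑bγ) : Set ℂ) := by
    rw [hbγ, basisOf_coe, range_pair, Lambda, ← Submodule.span_int_eq_addSubgroupClosure]
    rfl
  haveI hd : DiscreteTopology ((Lambda γ : Set ℂ)) := by
    rw [hset]; exact (inferInstance : DiscreteTopology (Submodule.span ℤ (Set.range ⇑bγ)))
  have hconst : ∀ f : ℂ → ℂ, Continuous f → (∀ z, f z ∈ Lambda γ) → ∀ z, f z = f 0 :=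
    fun f hf h z => const_of_discrete (S := (Lambda γ : Set ℂ)) hf h z
  set G : ℂ → ℂ := fun z => F (starRingEnd ℂ z) with hGdef
  have hGc : Continuous G := hF.continuous
  have hFz : ∀ z, F z = G (starRingEnd ℂ z) := fun z => by
    simp [hGdef, Complex.conj_conj]
  -- Step A : the increment functions are constant
  have hper' : ∀ l ∈ Lambda γ, ∀ z,
      G (z + starRingEnd ℂ l) = G z + (G (starRingEnd ℂ l) - G 0) := by
    intro l hl z
    have hcont : Continuous (fun w => G (w + starRingEnd ℂ l) - G w) :=
      (hGc.comp (continuous_id.add continuous_const)).sub hGc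
    have hmem : ∀ w, G (w + starRingEnd ℂ l) - G w ∈ Lambda γ := by
      intro w
      have h1 : G (w + starRingEnd ℂ l) = F (starRingEnd ℂ w + l) := by
        simp [hGdef, map_add, Complex.conj_conj]
      rw [h1]
      exact hper l hl (starRingEnd ℂ w)
    have h2 := hconst _ hcont hmem z
    simp only [zero_add] at h2
    linear_combination h2
  -- Step B : deriv G is doubly periodic
  have hder : ∀ l ∈ Lambda γ, ∀ z, deriv G (z + starRingEnd ℂ l) = deriv G z := by
    intro l hl z
    have hfun : (fun w => G (w + starRingEnd ℂ l))
        = fun w => G w + (G (starRingEnd ℂ l) - G 0) := funext fun w => hper' l hl w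
    calc deriv G (z + starRingEnd ℂ l)
        = deriv (fun w => G (w + starRingEnd ℂ l)) z :=
          (deriv_comp_add_const G (starRingEnd ℂ l) z).symm
      _ = deriv G z := by rw [hfun, deriv_add_const']
  -- conjugates of the conjugate lattice lie in the lattice
  have conj_mem : ∀ μ : ℂ, μ ∈ Submodule.span ℤ (Set.range ⇑bb) →
      starRingEnd ℂ μ ∈ Lambda γ := by
    intro μ hμ
    rw [hbb, basisOf_coe, range_pair] at hμ
    induction hμ using Submodule.span_induction with
    | mem x hx =>
        rcases hx with rfl | hx
        · simpa [Lambda] using AddSubgroup.subset_closure (show (1:ℂ) ∈ ({1, γ} : Set ℂ) by simp)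
        · simp only [Set.mem_singleton_iff] at hx
          subst hx
          simpa [Lambda, Complex.conj_conj] using
            AddSubgroup.subset_closure (show γ ∈ ({1, γ} : Set ℂ) by simp)
    | zero => simpa using (Lambda γ).zero_mem
    | add x y hx hy ihx ihy => simpa [map_add] using (Lambda γ).add_mem ihx ihy
    | smul n x hx ih => simpa [map_zsmul] using AddSubgroup.zsmul_mem _ ih n
  have hmemconj : ∀ v : Submodule.span ℤ (Set.range ⇑bb), ∀ z,
      deriv G ((v : ℂ) + z) = deriv G z := by
    intro v z
    have h1 : starRingEnd ℂ (v : ℂ) ∈ Lambda γ := conj_mem _ v.2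
    have h2 := hder _ h1 z
    rw [Complex.conj_conj] at h2
    rw [add_comm]; exact h2
  -- deriv G is differentiable (hence continuous)
  have h1 : Differentiable ℂ (fderiv ℂ G) := fun x => ((hF.analyticAt x).fderiv).differentiableAt
  have h2 : deriv G = fun x => fderiv ℂ G x 1 := funext fun x => (fderiv_apply_one_eq_deriv).symm
  have hDdiff : Differentiable ℂ (deriv G) := h2 ▸ h1.clm_apply (differentiable_const _)
  have hcder : Continuous (deriv G) := hDdiff.continuous
  -- deriv G is bounded
  have hKbd : Bornology.IsBounded (closure (ZSpan.fundamentalDomain bb)) :=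
    (ZSpan.fundamentalDomain_isBounded bb).closure
  have hK : IsCompact (closure (ZSpan.fundamentalDomain bb)) :=
    Metric.isCompact_of_isClosed_isBounded isClosed_closure hKbd
  have hrange : Set.range (deriv G) ⊆ deriv G '' closure (ZSpan.fundamentalDomain bb) := by
    rintro _ ⟨z, rfl⟩
    obtain ⟨v, hv, -⟩ := ZSpan.exist_unique_vadd_mem_fundamentalDomain bb z
    exact ⟨(v : ℂ) + z, subset_closure hv, hmemconj v z⟩
  have hbdd : Bornology.IsBounded (Set.range (deriv G)) :=
    ((hK.image hcder).isBounded).subset hrange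
  -- Liouville : deriv G is constant
  have hda : ∀ z, deriv G z = deriv G 0 := fun z => hDdiff.apply_eq_apply_of_bounded hbdd z 0
  set a := deriv G 0 with ha
  set b := G 0 with hbdef
  -- G is affine
  have hlin : ∀ z, G z = a * z + b := by
    intro z
    have hsub : Differentiable ℂ (fun w : ℂ => G w - a * w) :=
      hF.sub (differentiable_id.const_mul a)
    have hz : ∀ x, deriv (fun w : ℂ => G w - a * w) x = 0 := by
      intro x
      have hd1 : HasDerivAt (fun w : ℂ => a * w) a x := by
        simpa using (hasDerivAt_id x).const_mul a
      have hd2 : HasDerivAt G a x := by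
        have h := (hF x).hasDerivAt
        rwa [hda x] at h
      have := (hd2.sub hd1).deriv
      simpa [Pi.sub_def] using this
    have hcst := is_const_of_deriv_eq_zero hsub hz z 0
    simp only [mul_zero, sub_zero] at hcst
    linear_combination hcst
  have hFform : ∀ z, F z = a * starRingEnd ℂ z + b := fun z => by
    rw [hFz z, hlin]
  refine ⟨a, b, hFform, ?_, ?_, ?_⟩
  · -- a * conj a = 1
    have hkey : ∀ z, F (F z) - z
        = (a * starRingEnd ℂ a - 1) * z + (a * starRingEnd ℂ b + b) := by
      intro z
      rw [hFform, hFform]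
      simp only [map_add, map_mul, Complex.conj_conj]
      ring
    have hmem2 : ∀ z, (a * starRingEnd ℂ a - 1) * z + (a * starRingEnd ℂ b + b) ∈ Lambda γ := by
      intro z; rw [← hkey]; exact hinv z
    have hc2 := hconst _ (by fun_prop) hmem2
    have h1' := hc2 1
    simp only [mul_one, mul_zero, zero_add] at h1'
    linear_combination h1'
  · -- lattice invariance
    have hmap : ∀ l ∈ Lambda γ, a * starRingEnd ℂ l ∈ Lambda γ := by
      intro l hl
      have h := hper l hl 0
      rw [hFform, hFform] at h
      simpa using h
    have haa : a * starRingEnd ℂ a = 1 := by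
      have hkey : ∀ z, F (F z) - z
          = (a * starRingEnd ℂ a - 1) * z + (a * starRingEnd ℂ b + b) := by
        intro z
        rw [hFform, hFform]
        simp only [map_add, map_mul, Complex.conj_conj]
        ring
      have hmem2 : ∀ z,
          (a * starRingEnd ℂ a - 1) * z + (a * starRingEnd ℂ b + b) ∈ Lambda γ := by
        intro z; rw [← hkey]; exact hinv z
      have hc2 := hconst _ (by fun_prop) hmem2
      have h1' := hc2 1
      simp only [mul_one, mul_zero, zero_add] at h1'
      linear_combination h1'
    apply Set.eq_of_subset_of_subset
    · rintro _ ⟨l, hl, rfl⟩; exact hmap l hl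
    · intro x hx
      refine ⟨a * starRingEnd ℂ x, hmap x hx, ?_⟩
      simp only [map_mul, Complex.conj_conj]
      calc a * (starRingEnd ℂ a * x) = a * starRingEnd ℂ a * x := by ring
        _ = x := by rw [haa, one_mul]
  · -- a * conj b + b ∈ Λ
    have hkey : F (F 0) - 0 = a * starRingEnd ℂ b + b := by
      rw [hFform, hFform]
      simp only [map_add, map_mul, map_zero, Complex.conj_conj]
      ring
    have h := hinv 0
    rwa [hkey] at h
end

section
/- The map z ↦ γ·conj(z) descends to a well-defined involution of X_γ — that is, γ·conj(Λ_γ) ⊆ Λ_γ and γ·conj(γ·conj(z)) − z ∈ Λ_γ for all z ∈ ℂ — if and only if |γ| = 1. (This is the involution α_{(−,γ)} appearing for the regions C and D of Table 5.) -/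
open Complex

lemma mem_Lambda_iff (γ l : ℂ) : l ∈ Lambda γ ↔ ∃ m n : ℤ, l = m + n * γ := by
  constructor
  · intro h
    induction h using AddSubgroup.closure_induction with
    | mem x hx =>
      rcases hx with rfl | rfl
      · exact ⟨1, 0, by simp⟩
      · exact ⟨0, 1, by simp⟩
    | zero => exact ⟨0, 0, by simp⟩
    | add x y hx hy ihx ihy =>
      obtain ⟨m, n, rfl⟩ := ihx
      obtain ⟨m', n', rfl⟩ := ihy
      exact ⟨m + m', n + n', by push_cast; ring⟩
    | neg x hx ih =>
      obtain ⟨m, n, rfl⟩ := ih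
      exact ⟨-m, -n, by push_cast; ring⟩
  · rintro ⟨m, n, rfl⟩
    have h1 : (1 : ℂ) ∈ Lambda γ := AddSubgroup.subset_closure (by simp)
    have h2 : γ ∈ Lambda γ := AddSubgroup.subset_closure (by simp)
    have := AddSubgroup.add_mem _ (AddSubgroup.zsmul_mem _ h1 m) (AddSubgroup.zsmul_mem _ h2 n)
    simpa [zsmul_eq_mul] using this

/-- The map `z ↦ γ * conj z` descends to a well-defined involution of `X_γ`
(i.e. `γ · conj (Λ_γ) ⊆ Λ_γ` and `γ · conj (γ · conj z) - z ∈ Λ_γ` for all `z`)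
if and only if `|γ| = 1`. -/
theorem gamma_conj_involution_iff (γ : ℂ) (hγ : 0 < γ.im) :
    ((∀ l ∈ Lambda γ, γ * starRingEnd ℂ l ∈ Lambda γ) ∧
      (∀ z : ℂ, γ * starRingEnd ℂ (γ * starRingEnd ℂ z) - z ∈ Lambda γ)) ↔
      ‖γ‖ = 1 := by
  constructor
  · rintro ⟨-, h2⟩
    by_contra habs
    have hns : Complex.normSq γ ≠ 1 := by
      intro h
      apply habs
      rw [← Complex.sq_norm] at h
      nlinarith [norm_nonneg γ]
    set c : ℝ := Complex.normSq γ - 1 with hc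
    have hcne : (c : ℂ) ≠ 0 := by
      rw [Ne, hc, Complex.ofReal_eq_zero]
      exact sub_ne_zero.mpr hns
    have key : ∀ z : ℂ, γ * starRingEnd ℂ (γ * starRingEnd ℂ z) - z = (c : ℂ) * z := by
      intro z
      have : γ * starRingEnd ℂ (γ * starRingEnd ℂ z) = (Complex.normSq γ : ℂ) * z := by
        rw [map_mul, Complex.conj_conj, ← mul_assoc, Complex.mul_conj]
      rw [this, hc]
      push_cast
      ring
    have hmem := h2 ((1/2 : ℂ) / c)
    rw [key, mul_div_cancel₀ _ hcne, mem_Lambda_iff] at hmem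
    obtain ⟨m, n, hmn⟩ := hmem
    have him : ((1:ℂ)/2).im = (↑m + ↑n * γ).im := by rw [hmn]
    simp [Complex.add_im, Complex.mul_im] at him
    have hn : n = 0 := by
      rcases him with h | h
      · exact_mod_cast h
      · exact absurd h (ne_of_gt hγ)
    subst hn
    have hre : ((1:ℂ)/2).re = (↑m + (0:ℤ) * γ).re := by rw [hmn]
    simp at hre
    have : (2:ℝ) * m = 1 := by linarith
    have : (2 : ℤ) * m = 1 := by exact_mod_cast this
    omega
  · intro habs
    have hns : γ * starRingEnd ℂ γ = 1 := by
      rw [Complex.mul_conj]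
      norm_cast
      rw [← Complex.sq_norm, habs]; norm_num
    constructor
    · intro l hl
      rw [mem_Lambda_iff] at hl ⊢
      obtain ⟨m, n, rfl⟩ := hl
      refine ⟨n, m, ?_⟩
      rw [map_add, map_mul]
      simp only [map_intCast]
      have : γ * ((m : ℂ) + (n:ℂ) * starRingEnd ℂ γ) = (m:ℂ) * γ + (n:ℂ) * (γ * starRingEnd ℂ γ) := by ring
      rw [this, hns]
      ring
    · intro z
      have : γ * starRingEnd ℂ (γ * starRingEnd ℂ z) = (γ * starRingEnd ℂ γ) * z := by
        rw [map_mul]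
        simp
        ring
      rw [this, hns, one_mul, sub_self]
      exact AddSubgroup.zero_mem _
end

section
/- Let t > 0 and γ = 1/2 + i·t. Then conj(Λ_γ) = Λ_γ, so z ↦ conj(z) induces an anti-holomorphic involution σ of X_γ, and the fixed point set of σ equals the single circle p(ℝ), the image of the real axis. (This gives the topological type (1,1) of (X_γ, α_{(−,1)}) in region E.) -/
open Complex

/-- The complex torus `X_γ = ℂ / Λ_γ`. -/
abbrev XTorus (γ : ℂ) := ℂ ⧸ Lambda γ

/-- The quotient map `p : ℂ → X_γ`. -/
noncomputable def tproj (γ : ℂ) : ℂ → XTorus γ := QuotientAddGroup.mk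

lemma mem_Lambda (γ x : ℂ) : x ∈ Lambda γ ↔ ∃ m n : ℤ, x = m + n * γ := by
  constructor
  · intro hx
    induction hx using AddSubgroup.closure_induction with
    | mem y hy =>
      rcases hy with rfl | rfl
      · exact ⟨1, 0, by push_cast; ring⟩
      · exact ⟨0, 1, by push_cast; ring⟩
    | zero => exact ⟨0, 0, by push_cast; ring⟩
    | add a b ha hb hma hmb =>
      obtain ⟨m, n, rfl⟩ := hma
      obtain ⟨m', n', rfl⟩ := hmb
      exact ⟨m + m', n + n', by push_cast; ring⟩
    | neg a ha hma =>
      obtain ⟨m, n, rfl⟩ := hma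
      exact ⟨-m, -n, by push_cast; ring⟩
  · rintro ⟨m, n, rfl⟩
    refine add_mem ?_ ?_
    · simpa [Lambda] using AddSubgroup.zsmul_mem _ (AddSubgroup.subset_closure (by simp : (1:ℂ) ∈ ({1, γ}:Set ℂ))) m
    · simpa [Lambda, zsmul_eq_mul] using AddSubgroup.zsmul_mem _ (AddSubgroup.subset_closure (by simp : γ ∈ ({1, γ}:Set ℂ))) n

/-- For `γ = 1/2 + i t` with `t > 0` (region `E`): the lattice is conjugation-stable,
conjugation induces an anti-holomorphic involution `σ` of `X_γ`, and the fixed point set of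
`σ` is the single circle `p(ℝ)` (topological type `(1,1)`). -/
theorem region_E_conj_fixed_locus (t : ℝ) (ht : 0 < t) :
    (starRingEnd ℂ) '' (Lambda (1 / 2 + Complex.I * t) : Set ℂ)
        = (Lambda (1 / 2 + Complex.I * t) : Set ℂ) ∧
    ∃ σ : XTorus (1 / 2 + Complex.I * t) → XTorus (1 / 2 + Complex.I * t),
      (∀ z : ℂ, σ (tproj (1 / 2 + Complex.I * t) z)
          = tproj (1 / 2 + Complex.I * t) (starRingEnd ℂ z)) ∧
      {x : XTorus (1 / 2 + Complex.I * t) | σ x = x}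
        = tproj (1 / 2 + Complex.I * t) '' Set.range (Complex.ofReal) := by
  set γ : ℂ := 1 / 2 + Complex.I * t with hγ
  have hconjγ : (starRingEnd ℂ) γ = 1 - γ := by
    rw [hγ]
    apply Complex.ext <;> simp <;> norm_num
  have hmaps : ∀ x ∈ Lambda γ, (starRingEnd ℂ) x ∈ Lambda γ := by
    intro x hx
    rw [mem_Lambda] at hx ⊢
    obtain ⟨m, n, rfl⟩ := hx
    refine ⟨m + n, -n, ?_⟩
    simp only [map_add, map_mul, hconjγ, map_intCast]
    push_cast
    ring
  have himg : (starRingEnd ℂ) '' (Lambda γ : Set ℂ) = (Lambda γ : Set ℂ) := by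
    apply Set.Subset.antisymm
    · rintro _ ⟨x, hx, rfl⟩; exact hmaps x hx
    · intro x hx
      exact ⟨(starRingEnd ℂ) x, hmaps x hx, Complex.conj_conj x⟩
  refine ⟨himg, ?_⟩
  have hle : Lambda γ ≤ (Lambda γ).comap (starRingEnd ℂ).toAddMonoidHom := by
    intro x hx; exact hmaps x hx
  refine ⟨QuotientAddGroup.map _ _ (starRingEnd ℂ).toAddMonoidHom hle, fun z => rfl, ?_⟩
  ext x
  refine QuotientAddGroup.induction_on x ?_
  intro z
  simp only [Set.mem_setOf_eq]
  rw [QuotientAddGroup.map_mk]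
  constructor
  · intro h
    have h' : -((starRingEnd ℂ) z) + z ∈ Lambda γ := (QuotientAddGroup.eq).mp h
    rw [mem_Lambda] at h'
    obtain ⟨m, n, hmn⟩ := h'
    have hre : (0:ℝ) = m + n * (1/2) := by
      have := congrArg Complex.re hmn
      simpa [hγ, Complex.add_re, Complex.mul_re] using this
    have him : z.im + z.im = n * t := by
      have := congrArg Complex.im hmn
      simpa [hγ, Complex.add_im, Complex.mul_im] using this
    have hn : (n:ℝ) = -2 * m := by linarith
    have hzim : z.im = -m * t := by
      rw [hn] at him; linarith
    refine ⟨(↑(z.re + (m:ℝ)/2) : ℂ), ⟨z.re + (m:ℝ)/2, rfl⟩, ?_⟩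
    show QuotientAddGroup.mk _ = QuotientAddGroup.mk _
    rw [QuotientAddGroup.eq, mem_Lambda]
    refine ⟨0, -m, ?_⟩
    rw [hγ]
    apply Complex.ext <;> push_cast <;>
      simp [Complex.add_re, Complex.mul_re, Complex.add_im, Complex.mul_im, hzim] <;>
      try ring
  · rintro ⟨w, ⟨r, rfl⟩, hx⟩
    have hd : -((r:ℝ):ℂ) + z ∈ Lambda γ := QuotientAddGroup.eq.mp hx
    rw [QuotientAddGroup.eq]
    have key : -((starRingEnd ℂ) z) + z
        = -((starRingEnd ℂ) (-((r:ℝ):ℂ) + z)) + (-((r:ℝ):ℂ) + z) := by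
      simp only [map_add, map_neg, Complex.conj_ofReal]
      ring
    show -((starRingEnd ℂ) z) + z ∈ Lambda γ
    rw [key]
    exact add_mem (neg_mem (hmaps _ hd)) hd
end

section
/- Let γ = i. Then multiplication by i satisfies i·Λ_i = Λ_i, hence z ↦ i·z induces a group automorphism h of X_i, and h conjugates the involution induced by z ↦ conj(z) to the involution induced by z ↦ −conj(z): for all x ∈ X_i, h(σ₁(x)) = σ₂(h(x)), where σ₁(p(z)) = p(conj(z)) and σ₂(p(z)) = p(−conj(z)). (This realizes the Alling–Greenleaf isomorphism (X_γ, α_{(−,1)}) ≅ (X_γ, α_{(−,−1)}) in region B.) -/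
open Complex

lemma mulI_mem {z : ℂ} (hz : z ∈ Lambda Complex.I) :
    Complex.I * z ∈ Lambda Complex.I := by
  induction hz using AddSubgroup.closure_induction with
  | mem x hx =>
    rcases hx with h | h
    · subst h
      simpa [Lambda] using AddSubgroup.subset_closure (show Complex.I ∈ ({1, Complex.I} : Set ℂ) by simp)
    · simp only [Set.mem_singleton_iff] at h
      subst h
      rw [Complex.I_mul_I]
      exact neg_mem (AddSubgroup.subset_closure (by simp))
  | zero => simpa using zero_mem (Lambda Complex.I)
  | add x y _ _ hx hy => simpa [mul_add] using add_mem hx hy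
  | neg x _ hx => simpa [mul_neg] using neg_mem hx

/-- Multiplication by `I` as an additive automorphism of `ℂ`. -/
noncomputable def mulIEquiv : ℂ ≃+ ℂ :=
{ toFun := fun z => Complex.I * z
  invFun := fun z => -Complex.I * z
  left_inv := fun z => by
    simp [← mul_assoc, Complex.I_mul_I]
  right_inv := fun z => by
    simp [← mul_assoc, Complex.I_mul_I]
  map_add' := fun x y => mul_add _ _ _ }

lemma lambda_map : (Lambda Complex.I).map mulIEquiv.toAddMonoidHom = Lambda Complex.I := by
  apply le_antisymm
  · rintro _ ⟨z, hz, rfl⟩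
    exact mulI_mem hz
  · intro z hz
    refine ⟨-Complex.I * z, ?_, ?_⟩
    · have : -Complex.I * z = -(Complex.I * z) := by ring
      rw [this]
      exact neg_mem (mulI_mem hz)
    · show Complex.I * (-Complex.I * z) = z
      have : Complex.I * (-Complex.I * z) = -(Complex.I * Complex.I) * z := by ring
      rw [this, Complex.I_mul_I]; ring

/-- For `γ = i` (region `B`): multiplication by `i` preserves the lattice `Λ_i`, hence
induces a group automorphism `h` of `X_i`, and `h` conjugates the involution induced by
`z ↦ conj z` to the involution induced by `z ↦ -conj z` (the Alling–Greenleaf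
isomorphism `(X_γ, α_{(-,1)}) ≅ (X_γ, α_{(-,-1)})`). -/
theorem region_B_isomorphism :
    (fun z => Complex.I * z) '' (Lambda Complex.I : Set ℂ) = (Lambda Complex.I : Set ℂ) ∧
    ∃ h : XTorus Complex.I ≃+ XTorus Complex.I,
      (∀ z : ℂ, h (tproj Complex.I z) = tproj Complex.I (Complex.I * z)) ∧
      ∀ σ₁ σ₂ : XTorus Complex.I → XTorus Complex.I,
        (∀ z : ℂ, σ₁ (tproj Complex.I z) = tproj Complex.I (starRingEnd ℂ z)) →
        (∀ z : ℂ, σ₂ (tproj Complex.I z) = tproj Complex.I (-(starRingEnd ℂ z))) →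
        ∀ x, h (σ₁ x) = σ₂ (h x) := by
  constructor
  · have := lambda_map
    have h2 : ((Lambda Complex.I).map mulIEquiv.toAddMonoidHom : Set ℂ)
        = (fun z => Complex.I * z) '' (Lambda Complex.I : Set ℂ) := rfl
    rw [← h2, this]
  · refine ⟨QuotientAddGroup.congr (Lambda Complex.I) (Lambda Complex.I) mulIEquiv lambda_map,
      fun z => rfl, ?_⟩
    intro σ₁ σ₂ h1 h2 x
    obtain ⟨z, rfl⟩ := QuotientAddGroup.mk_surjective x
    have hx : (QuotientAddGroup.mk z : XTorus Complex.I) = tproj Complex.I z := rfl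
    rw [hx, h1]
    have : (QuotientAddGroup.congr (Lambda Complex.I) (Lambda Complex.I) mulIEquiv lambda_map)
        (tproj Complex.I (starRingEnd ℂ z)) = tproj Complex.I (Complex.I * starRingEnd ℂ z) := rfl
    rw [this]
    have : (QuotientAddGroup.congr (Lambda Complex.I) (Lambda Complex.I) mulIEquiv lambda_map)
        (tproj Complex.I z) = tproj Complex.I (Complex.I * z) := rfl
    rw [this, h2]
    congr 1
    simp [Complex.ext_iff]
end

section
/- Let t > 0, γ = i·t, and let σ be the involution of X_γ induced by z ↦ conj(z). For any y, c ∈ ℂ, the translation T_c(x) = x + p(c) of X_γ conjugates the anti-holomorphic map x ↦ p(y) + σ(x) to the map x ↦ p(y + c − conj(c)) + σ(x). Consequently, for every s ∈ ℝ the involution x ↦ p(1/2 + i·s) + σ(x) is conjugate, via a translation of X_γ, to the involution x ↦ p(1/2) + σ(x). (This realizes the Alling–Greenleaf isomorphism (X_γ, t_y ∘ α_{(−,1)}) ≅ (X_γ, t_{1/2} ∘ α_{(−,1)}) in region A.) -/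
open Complex

/-- For `γ = i t` with `t > 0` (region `A`), with `σ` the involution of `X_γ` induced by
conjugation: the translation `T_c : x ↦ x + p c` conjugates `x ↦ p y + σ x` into
`x ↦ p (y + c - conj c) + σ x`; consequently for every `s ∈ ℝ` the involution
`x ↦ p (1/2 + i s) + σ x` is conjugate via a translation to `x ↦ p (1/2) + σ x`
(the Alling–Greenleaf isomorphism `(X_γ, t_y ∘ α_{(-,1)}) ≅ (X_γ, t_{1/2} ∘ α_{(-,1)})`). -/
theorem region_A_translation_conjugation (t : ℝ) (ht : 0 < t)
    (σ : XTorus (Complex.I * t) → XTorus (Complex.I * t))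
    (hσ : ∀ z : ℂ, σ (tproj (Complex.I * t) z) = tproj (Complex.I * t) (starRingEnd ℂ z)) :
    (∀ y c : ℂ, ∀ x : XTorus (Complex.I * t),
      (tproj (Complex.I * t) y + σ (x - tproj (Complex.I * t) c)) + tproj (Complex.I * t) c
        = tproj (Complex.I * t) (y + c - starRingEnd ℂ c) + σ x) ∧
    ∀ s : ℝ, ∃ c : ℂ, ∀ x : XTorus (Complex.I * t),
      (tproj (Complex.I * t) (1 / 2 + Complex.I * s) + σ (x - tproj (Complex.I * t) c))
          + tproj (Complex.I * t) c
        = tproj (Complex.I * t) (1 / 2) + σ x := by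
  have key : ∀ y c : ℂ, ∀ x : XTorus (Complex.I * t),
      (tproj (Complex.I * t) y + σ (x - tproj (Complex.I * t) c)) + tproj (Complex.I * t) c
        = tproj (Complex.I * t) (y + c - starRingEnd ℂ c) + σ x := by
    intro y c x
    induction x using QuotientAddGroup.induction_on with
    | H z =>
      rw [show σ ((z : XTorus (Complex.I * t)) - tproj (Complex.I * t) c)
            = tproj (Complex.I * t) (starRingEnd ℂ (z - c)) from hσ (z - c),
          show σ (z : XTorus (Complex.I * t)) = tproj (Complex.I * t) (starRingEnd ℂ z) from hσ z]
      show tproj (Complex.I * t) _ + tproj (Complex.I * t) _ + tproj (Complex.I * t) _ = _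
      have hadd : ∀ a b : ℂ, tproj (Complex.I * t) a + tproj (Complex.I * t) b
          = tproj (Complex.I * t) (a + b) := fun a b => rfl
      rw [hadd, hadd, hadd]
      congr 1
      simp [map_sub]
      ring
  refine ⟨key, fun s => ⟨-Complex.I * s / 2, fun x => ?_⟩⟩
  have := key (1 / 2 + Complex.I * s) (-Complex.I * s / 2) x
  rw [this]
  congr 1
  have : starRingEnd ℂ (-Complex.I * s / 2) = Complex.I * s / 2 := by
    simp [map_div₀, Complex.conj_ofReal]
    rw [map_ofNat]
  rw [this]
  ring
end
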